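/- Let n ≥ d ≥ 1 and p ≥ d be integers with n − d + 1 ≥ 1 and p − d + 1 ≥ 1, and let ε > 0. For w ∈ {0,1}^{n−d+1} define U^w ∈ ℝ^{n×d} whose first column is (εw, 0_{d−1}) (i.e., εw in the first n−d+1 entries, zeros below), whose bottom-right (d−1)×(d−1) block is the identity I_{d−1}, and which is zero elsewhere; define V⁰ ∈ ℝ^{p×d} whose first column has its first p−d+1 entries equal to 1 and the rest 0, whose bottom-right (d−1)×(d−1) block is I_{d−1}, and which is zero elsewhere. Then for all w₁, w₂ ∈ {0,1}^{n−d+1}: ‖U^{w₁}(V⁰)ᵀ − U^{w₂}(V⁰)ᵀ‖_F² = (p − d + 1) · ε² · d_H(w₁, w₂), where d_H denotes Hamming distance. -/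

import Mathlib

open scoped Matrix
open Finset

/-- Frobenius norm of a real matrix. -/
noncomputable def frob {m l : Type*} [Fintype m] [Fintype l] (A : Matrix m l ℝ) : ℝ :=
  Real.sqrt (∑ i, ∑ j, (A i j) ^ 2)

/-- The hypothesis matrix `U^w ∈ ℝ^{n×d}`: first column is `(εw, 0_{d−1})`, the
bottom-right `(d−1)×(d−1)` block is the identity, and all other entries are zero. -/
noncomputable def Uw (n d : ℕ) (ε : ℝ) (w : Fin (n - d + 1) → ℝ) : Matrix (Fin n) (Fin d) ℝ :=
  Matrix.of fun i c =>
    if (c : ℕ) = 0 then (if h : (i : ℕ) < n - d + 1 then ε * w ⟨i, h⟩ else 0)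
    else (if (i : ℕ) = n - d + (c : ℕ) then 1 else 0)

/-- The matrix `V⁰ ∈ ℝ^{p×d}`: first column has its first `p−d+1` entries equal to 1 and
the rest 0, the bottom-right `(d−1)×(d−1)` block is the identity, zero elsewhere. -/
noncomputable def V0 (p d : ℕ) : Matrix (Fin p) (Fin d) ℝ :=
  Matrix.of fun i c =>
    if (c : ℕ) = 0 then (if (i : ℕ) < p - d + 1 then 1 else 0)
    else (if (i : ℕ) = p - d + (c : ℕ) then 1 else 0)

/-- separation identity for the asymmetric hypothesis construction:
`‖U^{w₁}(V⁰)ᵀ − U^{w₂}(V⁰)ᵀ‖_F² = (p−d+1)·ε²·d_H(w₁,w₂)` for binary `w₁, w₂`. -/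
theorem stmt_12 (n p d : ℕ) (hd : 1 ≤ d) (hdn : d ≤ n) (hdp : d ≤ p)
    (ε : ℝ) (hε : 0 < ε)
    (w₁ w₂ : Fin (n - d + 1) → ℝ)
    (hw₁ : ∀ i, w₁ i = 0 ∨ w₁ i = 1) (hw₂ : ∀ i, w₂ i = 0 ∨ w₂ i = 1) :
    (frob (Uw n d ε w₁ * (V0 p d)ᵀ - Uw n d ε w₂ * (V0 p d)ᵀ)) ^ 2 =
      ((p - d + 1 : ℕ) : ℝ) * ε ^ 2 *
        ((Finset.univ.filter fun i => w₁ i ≠ w₂ i).card : ℝ) := by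
  haveI : NeZero d := ⟨by omega⟩
  have hmn : n - d + 1 ≤ n := by omega
  have hqp : p - d + 1 ≤ p := by omega
  have entry : ∀ (i : Fin n) (j : Fin p),
      (Uw n d ε w₁ * (V0 p d)ᵀ - Uw n d ε w₂ * (V0 p d)ᵀ) i j
      = (if h : (i : ℕ) < n - d + 1 then ε * (w₁ ⟨i, h⟩ - w₂ ⟨i, h⟩) else 0)
        * (if (j : ℕ) < p - d + 1 then 1 else 0) := by
    intro i j
    simp only [Matrix.sub_apply, Matrix.mul_apply, Matrix.transpose_apply, Uw, V0,
      Matrix.of_apply]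
    rw [← Finset.sum_sub_distrib]
    rw [Finset.sum_eq_single (0 : Fin d)]
    · simp only [Fin.val_zero, if_true]
      split_ifs with h1 h2 <;> ring
    · intro c _ hc
      have hc' : (c : ℕ) ≠ 0 := by
        exact fun h => hc (Fin.ext (by simp [h]))
      simp [hc', sub_self]
    · intro h; exact absurd (Finset.mem_univ _) h
  rw [frob, Real.sq_sqrt (by positivity)]
  simp only [entry]
  have key : ∀ (i : Fin n) (j : Fin p),
      ((if h : (i : ℕ) < n - d + 1 then ε * (w₁ ⟨i, h⟩ - w₂ ⟨i, h⟩) else 0)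
        * (if (j : ℕ) < p - d + 1 then 1 else 0)) ^ 2
      = (if h : (i : ℕ) < n - d + 1 then ε ^ 2 * (w₁ ⟨i, h⟩ - w₂ ⟨i, h⟩) ^ 2 else 0)
        * (if (j : ℕ) < p - d + 1 then (1 : ℝ) else 0) := by
    intro i j
    split_ifs <;> ring
  simp only [key]
  rw [← Finset.sum_mul_sum]
  have hcol : ∑ j : Fin p, (if (j : ℕ) < p - d + 1 then (1 : ℝ) else 0)
      = ((p - d + 1 : ℕ) : ℝ) := by
    rw [Fin.sum_univ_eq_sum_range (fun k => if k < p - d + 1 then (1 : ℝ) else 0)]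
    rw [← Finset.sum_subset (Finset.range_subset_range.mpr hqp)
      (by intro k _ hk; simp at hk ⊢; omega)]
    rw [Finset.sum_congr rfl (fun k hk => if_pos (Finset.mem_range.mp hk))]
    simp
  have hrow : ∑ i : Fin n,
      (if h : (i : ℕ) < n - d + 1 then ε ^ 2 * (w₁ ⟨i, h⟩ - w₂ ⟨i, h⟩) ^ 2 else 0)
      = ε ^ 2 * ((Finset.univ.filter fun i => w₁ i ≠ w₂ i).card : ℝ) := by
    rw [Fin.sum_univ_eq_sum_range
      (fun k => if h : k < n - d + 1 then ε ^ 2 * (w₁ ⟨k, h⟩ - w₂ ⟨k, h⟩) ^ 2 else 0)]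
    rw [← Finset.sum_subset (Finset.range_subset_range.mpr hmn)
      (by intro k _ hk; simp at hk; rw [dif_neg (by omega)])]
    rw [← Fin.sum_univ_eq_sum_range
      (fun k => if h : k < n - d + 1 then ε ^ 2 * (w₁ ⟨k, h⟩ - w₂ ⟨k, h⟩) ^ 2 else 0)]
    have : ∀ i : Fin (n - d + 1),
        (if h : (i : ℕ) < n - d + 1 then ε ^ 2 * (w₁ ⟨i, h⟩ - w₂ ⟨i, h⟩) ^ 2 else 0)
        = ε ^ 2 * (if w₁ i ≠ w₂ i then (1 : ℝ) else 0) := by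
      intro i
      rw [dif_pos i.isLt]
      rcases hw₁ i with h1 | h1 <;> rcases hw₂ i with h2 | h2 <;>
        simp [Fin.eta, h1, h2] <;> norm_num
    simp only [this]
    rw [← Finset.mul_sum, Finset.sum_boole]
  rw [hrow, hcol]
  ring
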